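/- Let β be a real d×d matrix, α a positive semidefinite real symmetric d×d matrix, and p ≥ 0. For a positive semidefinite real symmetric d×d matrix u, define φ(t,u) = p·log det(I + u σ_t^β(α)) and ψ(t,u) = e^{βᵀt} u (I + σ_t^β(α) u)^{-1} e^{βt}. Then (φ, ψ) satisfy the semiflow equations: for all s, t ≥ 0 and all positive semidefinite u, φ(t+s, u) = φ(t, u) + φ(s, ψ(t,u)) and ψ(t+s, u) = ψ(s, ψ(t,u)). -/

import Mathlib

open MeasureTheory Matrix

/-- The flow `ω_t^β(x) = e^{βt} x e^{βᵀt}` on real `d×d` matrices. -/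
noncomputable def omegaFlow {d : ℕ} (β : Matrix (Fin d) (Fin d) ℝ) (t : ℝ)
    (x : Matrix (Fin d) (Fin d) ℝ) : Matrix (Fin d) (Fin d) ℝ :=
  NormedSpace.exp (t • β) * x * (NormedSpace.exp (t • β))ᵀ

/-- The twofold integral `σ_t^β(x) = 2 ∫₀ᵗ ω_s^β(x) ds`, defined entrywise. -/
noncomputable def sigmaFlow {d : ℕ} (β : Matrix (Fin d) (Fin d) ℝ) (t : ℝ)
    (x : Matrix (Fin d) (Fin d) ℝ) : Matrix (Fin d) (Fin d) ℝ :=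
  Matrix.of fun i j => 2 * ∫ s in (0 : ℝ)..t, omegaFlow β s x i j

variable {d : ℕ}

lemma exp_cont (β : Matrix (Fin d) (Fin d) ℝ) :
    Continuous fun s : ℝ => NormedSpace.exp (s • β) := by
  letI : SeminormedRing (Matrix (Fin d) (Fin d) ℝ) := Matrix.linftyOpSemiNormedRing
  letI : NormedRing (Matrix (Fin d) (Fin d) ℝ) := Matrix.linftyOpNormedRing
  letI : NormedAlgebra ℝ (Matrix (Fin d) (Fin d) ℝ) := Matrix.linftyOpNormedAlgebra
  letI : NormedAlgebra ℚ (Matrix (Fin d) (Fin d) ℝ) := Matrix.linftyOpNormedAlgebra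
  exact NormedSpace.exp_continuous.comp (continuous_id.smul continuous_const)

lemma omega_cont (β x : Matrix (Fin d) (Fin d) ℝ) :
    Continuous fun s : ℝ => omegaFlow β s x :=
  ((exp_cont β).matrix_mul continuous_const).matrix_mul (exp_cont β).matrix_transpose

lemma omega_entry_intble (β x : Matrix (Fin d) (Fin d) ℝ) (i j : Fin d) (a b : ℝ) :
    IntervalIntegrable (fun s => omegaFlow β s x i j) volume a b :=
  (((continuous_apply j).comp ((continuous_apply i).comp (omega_cont β x)))).intervalIntegrable a b

lemma omega_posSemidef {β α : Matrix (Fin d) (Fin d) ℝ} (hα : α.PosSemidef) (s : ℝ) :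
    (omegaFlow β s α).PosSemidef := by
  have := hα.mul_mul_conjTranspose_same (NormedSpace.exp (s • β))
  simpa [omegaFlow, Matrix.conjTranspose_eq_transpose_of_trivial, Matrix.mul_assoc] using this

/-- conjugation by constant matrices commutes with the entrywise interval integral -/
lemma conj_integral (P Q : Matrix (Fin d) (Fin d) ℝ) (f : ℝ → Matrix (Fin d) (Fin d) ℝ)
    (hf : Continuous f) (a b : ℝ) :
    P * (Matrix.of fun i j => ∫ s in a..b, f s i j) * Q =
      Matrix.of fun i j => ∫ s in a..b, (P * f s * Q) i j := by
  have hent : ∀ (k l : Fin d), IntervalIntegrable (fun s => f s k l) volume a b :=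
    fun k l => (((continuous_apply l).comp ((continuous_apply k).comp hf))).intervalIntegrable a b
  ext i j
  simp only [Matrix.mul_apply, Matrix.of_apply]
  have hc : ∀ (l : Fin d), IntervalIntegrable (fun s => ∑ k, P i k * f s k l) volume a b :=
    fun l => by
      have : Continuous fun s => ∑ k, P i k * f s k l :=
        continuous_finset_sum _ fun k _ =>
          continuous_const.mul ((continuous_apply l).comp ((continuous_apply k).comp hf))
      exact this.intervalIntegrable a b
  rw [intervalIntegral.integral_finset_sum (fun l _ => (hc l).mul_const _)]
  refine Finset.sum_congr rfl fun l _ => ?_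
  rw [intervalIntegral.integral_mul_const,
    intervalIntegral.integral_finset_sum (fun k _ => (hent k l).const_mul (P i k))]
  congr 1
  exact Finset.sum_congr rfl fun k _ => (intervalIntegral.integral_const_mul _ _).symm

lemma sigma_posSemidef {β α : Matrix (Fin d) (Fin d) ℝ} (hα : α.PosSemidef) {t : ℝ}
    (ht : 0 ≤ t) : (sigmaFlow β t α).PosSemidef := by
  refine Matrix.PosSemidef.of_dotProduct_mulVec_nonneg ?_ ?_
  · ext i j
    simp only [Matrix.conjTranspose_apply, sigmaFlow, Matrix.of_apply, star_trivial]
    congr 1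
    refine intervalIntegral.integral_congr fun s _ => ?_
    have h := (omega_posSemidef (β := β) hα s).1
    calc omegaFlow β s α j i = (omegaFlow β s α)ᴴ i j := by
          simp [Matrix.conjTranspose_apply]
      _ = omegaFlow β s α i j := by rw [h]
  · intro x
    have key : (star x) ⬝ᵥ (sigmaFlow β t α) *ᵥ x
        = ∫ s in (0:ℝ)..t, (star x) ⬝ᵥ ((2:ℝ) • omegaFlow β s α) *ᵥ x := by
      simp only [dotProduct, mulVec, sigmaFlow, Matrix.of_apply, star_trivial,
        Matrix.smul_apply, smul_eq_mul]
      rw [intervalIntegral.integral_finset_sum (fun i _ => by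
        have : Continuous fun s => x i * ∑ j, 2 * omegaFlow β s α i j * x j :=
          continuous_const.mul (continuous_finset_sum _ fun j _ =>
            ((continuous_const.mul ((continuous_apply j).comp
              ((continuous_apply i).comp (omega_cont β α)))).mul continuous_const))
        exact this.intervalIntegrable 0 t)]
      refine Finset.sum_congr rfl fun i _ => ?_
      rw [intervalIntegral.integral_const_mul]
      congr 1
      rw [intervalIntegral.integral_finset_sum (fun j _ => by
        have : Continuous fun s => 2 * omegaFlow β s α i j * x j :=
          (continuous_const.mul ((continuous_apply j).comp
            ((continuous_apply i).comp (omega_cont β α)))).mul continuous_const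
        exact this.intervalIntegrable 0 t)]
      refine Finset.sum_congr rfl fun j _ => ?_
      rw [intervalIntegral.integral_mul_const, intervalIntegral.integral_const_mul]
    rw [key]
    refine intervalIntegral.integral_nonneg ht fun s _ => ?_
    have h := (omega_posSemidef (β := β) hα s).dotProduct_mulVec_nonneg x
    have : (star x) ⬝ᵥ ((2:ℝ) • omegaFlow β s α) *ᵥ x
        = 2 * ((star x) ⬝ᵥ (omegaFlow β s α) *ᵥ x) := by
      simp [Matrix.smul_mulVec, dotProduct_smul]
    rw [this]
    positivity

lemma exp_smul_add (β : Matrix (Fin d) (Fin d) ℝ) (t r : ℝ) :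
    NormedSpace.exp ((t + r) • β)
      = NormedSpace.exp (t • β) * NormedSpace.exp (r • β) := by
  rw [add_smul]
  exact Matrix.exp_add_of_commute _ _ (((Commute.refl β).smul_left t).smul_right r)

lemma omega_comp (β α : Matrix (Fin d) (Fin d) ℝ) (t r : ℝ) :
    omegaFlow β (t + r) α =
      NormedSpace.exp (t • β) * omegaFlow β r α * (NormedSpace.exp (t • β))ᵀ := by
  simp [omegaFlow, exp_smul_add, Matrix.transpose_mul, Matrix.mul_assoc]

lemma sigma_add {β α : Matrix (Fin d) (Fin d) ℝ} (t s : ℝ) :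
    sigmaFlow β (t + s) α = sigmaFlow β t α +
      NormedSpace.exp (t • β) * sigmaFlow β s α * (NormedSpace.exp (t • β))ᵀ := by
  have hσ : ∀ t' : ℝ, sigmaFlow β t' α
      = Matrix.of fun i j => ∫ r in (0:ℝ)..t', ((2:ℝ) • omegaFlow β r α) i j := by
    intro t'
    ext i j
    simp only [sigmaFlow, Matrix.of_apply, Matrix.smul_apply, smul_eq_mul]
    rw [intervalIntegral.integral_const_mul]
  have hcont : Continuous fun r : ℝ => (2:ℝ) • omegaFlow β r α :=
    (omega_cont β α).const_smul (2:ℝ)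
  rw [hσ (t + s), hσ t, hσ s, conj_integral _ _ _ hcont]
  ext i j
  simp only [Matrix.add_apply, Matrix.of_apply]
  have hsplit : (∫ r in (0:ℝ)..(t+s), ((2:ℝ) • omegaFlow β r α) i j)
      = (∫ r in (0:ℝ)..t, ((2:ℝ) • omegaFlow β r α) i j)
        + ∫ r in t..(t+s), ((2:ℝ) • omegaFlow β r α) i j := by
    rw [intervalIntegral.integral_add_adjacent_intervals]
    · exact (((continuous_apply j).comp ((continuous_apply i).comp hcont))).intervalIntegrable 0 t
    · exact (((continuous_apply j).comp ((continuous_apply i).comp hcont))).intervalIntegrable t _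
  rw [hsplit]
  congr 1
  have : ∀ r : ℝ, (NormedSpace.exp (t • β) * ((2:ℝ) • omegaFlow β r α)
      * (NormedSpace.exp (t • β))ᵀ) i j = ((2:ℝ) • omegaFlow β (t + r) α) i j := by
    intro r
    rw [omega_comp]
    simp [Matrix.mul_smul, Matrix.smul_mul]
  calc (∫ r in t..(t+s), ((2:ℝ) • omegaFlow β r α) i j)
      = ∫ r in (0:ℝ)..s, ((2:ℝ) • omegaFlow β (t + r) α) i j := by
        rw [intervalIntegral.integral_comp_add_left (fun r => ((2:ℝ) • omegaFlow β r α) i j) t]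
        norm_num
    _ = ∫ r in (0:ℝ)..s, (NormedSpace.exp (t • β) * ((2:ℝ) • omegaFlow β r α)
          * (NormedSpace.exp (t • β))ᵀ) i j := by
        refine intervalIntegral.integral_congr fun r _ => ?_
        rw [this]

lemma det_one_add_psd_mul_psd {M u : Matrix (Fin d) (Fin d) ℝ}
    (hM : M.PosSemidef) (hu : u.PosSemidef) : IsUnit (1 + M * u).det := by
  obtain ⟨r, hrr, hrH⟩ : ∃ r : Matrix (Fin d) (Fin d) ℝ, r * r = u ∧ rᴴ = r :=
    by open scoped MatrixOrder in exact ⟨CFC.sqrt u, CFC.sqrt_mul_sqrt_self u hu.nonneg, (CFC.sqrt_nonneg u).posSemidef.1⟩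
  rw [← hrr, ← Matrix.mul_assoc, Matrix.det_one_add_mul_comm]
  have h3 : r * (M * r) = rᴴ * M * r := by rw [hrH, Matrix.mul_assoc]
  rw [h3]
  exact (Matrix.PosDef.add_posSemidef Matrix.PosDef.one
    (hM.conjTranspose_mul_mul_same r)).det_pos.ne'.isUnit

lemma inv_push {P Q : Matrix (Fin d) (Fin d) ℝ}
    (h : IsUnit (1 + P * Q).det) (h' : IsUnit (1 + Q * P).det) :
    P * (1 + Q * P)⁻¹ = (1 + P * Q)⁻¹ * P := by
  have key : (1 + P * Q) * P = P * (1 + Q * P) := by noncomm_ring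
  calc P * (1 + Q * P)⁻¹
      = (1 + P * Q)⁻¹ * ((1 + P * Q) * P) * (1 + Q * P)⁻¹ := by
        rw [← Matrix.mul_assoc, Matrix.nonsing_inv_mul _ h, Matrix.one_mul]
    _ = (1 + P * Q)⁻¹ * (P * ((1 + Q * P) * (1 + Q * P)⁻¹)) := by
        rw [key, Matrix.mul_assoc, Matrix.mul_assoc]
    _ = (1 + P * Q)⁻¹ * P := by rw [Matrix.mul_nonsing_inv _ h', Matrix.mul_one]

/-- `φ(t,u) = p · log det (I + u σ_t^β(α))`. -/
noncomputable def wishartPhi {d : ℕ} (β α : Matrix (Fin d) (Fin d) ℝ) (p t : ℝ)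
    (u : Matrix (Fin d) (Fin d) ℝ) : ℝ :=
  p * Real.log (1 + u * sigmaFlow β t α).det

/-- `ψ(t,u) = e^{βᵀt} u (I + σ_t^β(α) u)⁻¹ e^{βt}`. -/
noncomputable def wishartPsi {d : ℕ} (β α : Matrix (Fin d) (Fin d) ℝ) (t : ℝ)
    (u : Matrix (Fin d) (Fin d) ℝ) : Matrix (Fin d) (Fin d) ℝ :=
  NormedSpace.exp (t • βᵀ) * u * (1 + sigmaFlow β t α * u)⁻¹ * NormedSpace.exp (t • β)

/-- The functions `(φ, ψ)` satisfy the semiflow equations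
`φ(t+s, u) = φ(t, u) + φ(s, ψ(t,u))` and `ψ(t+s, u) = ψ(s, ψ(t,u))`
for all `s, t ≥ 0` and all positive semidefinite `u`. -/
theorem wishart_semiflow_equations {d : ℕ} (β : Matrix (Fin d) (Fin d) ℝ)
    (α : Matrix (Fin d) (Fin d) ℝ) (hα : α.PosSemidef) (p : ℝ) (hp : 0 ≤ p)
    (s t : ℝ) (hs : 0 ≤ s) (ht : 0 ≤ t)
    (u : Matrix (Fin d) (Fin d) ℝ) (hu : u.PosSemidef) :
    wishartPhi β α p (t + s) u = wishartPhi β α p t u + wishartPhi β α p s (wishartPsi β α t u) ∧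
      wishartPsi β α (t + s) u = wishartPsi β α s (wishartPsi β α t u) := by
  have hexpT : ∀ r : ℝ, NormedSpace.exp (r • βᵀ) = (NormedSpace.exp (r • β))ᵀ := by
    intro r
    rw [← Matrix.transpose_smul, Matrix.exp_transpose]
  set E := NormedSpace.exp (t • β) with hE
  set F := NormedSpace.exp (s • β) with hF
  set A := sigmaFlow β t α with hA
  set S := sigmaFlow β s α with hS
  set B := E * S * Eᵀ with hB
  have hadd : sigmaFlow β (t + s) α = A + B := sigma_add t s
  have hApsd : A.PosSemidef := sigma_posSemidef hα ht
  have hSpsd : S.PosSemidef := sigma_posSemidef hα hs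
  have hABpsd : (A + B).PosSemidef := hadd ▸ sigma_posSemidef hα (by linarith)
  have h1 : IsUnit (1 + A * u).det := det_one_add_psd_mul_psd hApsd hu
  have h2 : IsUnit (1 + (A + B) * u).det := det_one_add_psd_mul_psd hABpsd hu
  have master : (1 + B * u * (1 + A * u)⁻¹) * (1 + A * u) = 1 + (A + B) * u := by
    have hx : B * u * (1 + A * u)⁻¹ * (1 + A * u) = B * u := by
      rw [Matrix.mul_assoc, Matrix.nonsing_inv_mul _ h1, Matrix.mul_one]
    calc (1 + B * u * (1 + A * u)⁻¹) * (1 + A * u)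
        = 1 + A * u + B * u * (1 + A * u)⁻¹ * (1 + A * u) := by
          rw [Matrix.add_mul, Matrix.one_mul]
      _ = 1 + (A + B) * u := by rw [hx, Matrix.add_mul, add_assoc]
  have hdetmul : (1 + B * u * (1 + A * u)⁻¹).det * (1 + A * u).det
      = (1 + (A + B) * u).det := by rw [← Matrix.det_mul, master]
  have h3 : IsUnit (1 + B * u * (1 + A * u)⁻¹).det :=
    isUnit_of_mul_isUnit_left (hdetmul ▸ h2)
  have hψt : wishartPsi β α t u = Eᵀ * u * (1 + A * u)⁻¹ * E := by
    rw [wishartPsi, hexpT]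
  set v := Eᵀ * u * (1 + A * u)⁻¹ * E with hv
  set Q := S * Eᵀ * u * (1 + A * u)⁻¹ with hQ
  have hEQ : 1 + E * Q = 1 + B * u * (1 + A * u)⁻¹ := by rw [hQ, hB]; noncomm_ring
  have hQunit : IsUnit (1 + E * Q).det := by rw [hEQ]; exact h3
  have hQunit' : IsUnit (1 + Q * E).det := by
    have := Matrix.det_one_add_mul_comm E Q
    rw [← this]; exact hQunit
  have hSv : S * v = Q * E := by rw [hv, hQ]; noncomm_ring
  -- the φ equation
  have hφ : wishartPhi β α p (t + s) u
      = wishartPhi β α p t u + wishartPhi β α p s (wishartPsi β α t u) := by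
    have hdv : (1 + v * S).det = (1 + B * u * (1 + A * u)⁻¹).det := by
      calc (1 + v * S).det = (1 + Eᵀ * (u * (1 + A * u)⁻¹ * E * S)).det := by
            congr 1; rw [hv]; noncomm_ring
        _ = (1 + u * (1 + A * u)⁻¹ * E * S * Eᵀ).det := by
            rw [Matrix.det_one_add_mul_comm]
        _ = (1 + u * ((1 + A * u)⁻¹ * E * S * Eᵀ)).det := by congr 1; noncomm_ring
        _ = (1 + (1 + A * u)⁻¹ * E * S * Eᵀ * u).det := by
            rw [Matrix.det_one_add_mul_comm]
        _ = (1 + (1 + A * u)⁻¹ * (E * S * Eᵀ * u)).det := by congr 1; noncomm_ring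
        _ = (1 + E * S * Eᵀ * u * (1 + A * u)⁻¹).det := by
            rw [Matrix.det_one_add_mul_comm]
        _ = (1 + B * u * (1 + A * u)⁻¹).det := by rw [hB]
    rw [wishartPhi, wishartPhi, wishartPhi, hadd, hψt, ← hA, ← hS]
    rw [Matrix.det_one_add_mul_comm, ← hdetmul, Real.log_mul
      (isUnit_iff_ne_zero.mp h3) (isUnit_iff_ne_zero.mp h1), hdv]
    rw [Matrix.det_one_add_mul_comm u A]
    ring
  refine ⟨hφ, ?_⟩
  -- the ψ equation
  have hEF : E * F = NormedSpace.exp ((t + s) • β) := (exp_smul_add β t s).symm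
  have hFEt : Fᵀ * Eᵀ = NormedSpace.exp ((t + s) • βᵀ) := by
    rw [hexpT, ← hEF, Matrix.transpose_mul]
  rw [hψt]
  calc wishartPsi β α (t + s) u
      = NormedSpace.exp ((t + s) • βᵀ) * u * (1 + (A + B) * u)⁻¹
          * NormedSpace.exp ((t + s) • β) := by rw [wishartPsi, hadd]
    _ = (Fᵀ * Eᵀ) * u * ((1 + A * u)⁻¹ * (1 + E * Q)⁻¹) * (E * F) := by
        rw [hFEt, hEF]
        congr 2
        rw [← Matrix.mul_inv_rev, hEQ, master]
    _ = Fᵀ * (Eᵀ * u * (1 + A * u)⁻¹) * ((1 + E * Q)⁻¹ * E) * F := by noncomm_ring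
    _ = Fᵀ * (Eᵀ * u * (1 + A * u)⁻¹) * (E * (1 + Q * E)⁻¹) * F := by
        rw [inv_push hQunit hQunit']
    _ = Fᵀ * v * (1 + Q * E)⁻¹ * F := by rw [hv]; noncomm_ring
    _ = wishartPsi β α s v := by rw [wishartPsi, hexpT, ← hF, ← hS, hSv]
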